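/- With the matrices, partition, DG space V_DG^r and energy norm |||·||| as in the context, the functional |||·||| is a norm on V_DG^r; in particular, if z ∈ V_DG^r satisfies |||z||| = 0, then z = 0 identically on (0,T]. -/

import Mathlib

open Matrix MeasureTheory Set

/-- Squared Euclidean norm of a vector. -/
noncomputable def esq {ι : Type*} [Fintype ι] (v : ι → ℝ) : ℝ := ∑ i, v i ^ 2

/-- `v : ℝ → ℝ^{2d}` is (componentwise) a polynomial of degree at most `r`. -/
def IsPolyDegV {d : ℕ} (r : ℕ) (v : ℝ → (Fin d ⊕ Fin d) → ℝ) : Prop :=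
  ∀ i, ∃ p : Polynomial ℝ, p.natDegree ≤ r ∧ ∀ s, v s i = p.eval s

/-- The squared DG energy norm
`|||z|||² = Σₙ ∫_{Iₙ} |L̃ z|² dt + ½|K̃^{1/2} z(0⁺)|² + ½ Σ_{n=1}^{N−1} |K̃^{1/2}[z]ₙ|²
           + ½|K̃^{1/2} z(T⁻)|²`,
where `z` is represented by the family `Z` of its extensions from the slabs
`Iₙ = (t_{n−1}, tₙ]` (so `z(tₙ⁺) = Z (n+1) (t n)`, `z(tₙ⁻) = Z n (t n)`). -/
noncomputable def dgNormSq {d : ℕ}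
    (Ltil Ksqrt : Matrix (Fin d ⊕ Fin d) (Fin d ⊕ Fin d) ℝ)
    (N : ℕ) (t : ℕ → ℝ) (Z : ℕ → ℝ → (Fin d ⊕ Fin d) → ℝ) : ℝ :=
  (∑ n ∈ Finset.Icc 1 N, ∫ s in (t (n-1))..(t n), esq (Ltil.mulVec (Z n s)))
  + (1/2) * esq (Ksqrt.mulVec (Z 1 (t 0)))
  + (1/2) * ∑ n ∈ Finset.Icc 1 (N-1), esq (Ksqrt.mulVec (Z (n+1) (t n) - Z n (t n)))
  + (1/2) * esq (Ksqrt.mulVec (Z N (t N)))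

/-- Membership in the DG space `V_DG^r`: `z` (represented slab-wise by `Z`) is a piecewise
polynomial of degree `≤ rₙ` on each slab, admitting a continuous reconstruction
`ẑ = (û,ŵ)` (represented slab-wise by `Zh`, matching at the nodes) which is slab-wise
polynomial of degree `≤ rₙ`, satisfies `û′ = ŵ`, the reconstruction identity
`∫_{Iₙ} ẑ′·v dt = ∫_{Iₙ} ż·v dt + [z]_{n−1}·v(t_{n−1}⁺)` for all polynomial test
functions `v` of degree `≤ rₙ` (with `z(0⁻) := ẑ(0)` in the jump `[z]₀`), and
`ẑ(t_{n−1}) = z(t_{n−1}⁻)` for `n = 2,…,N`. -/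
def MemDG {d : ℕ} (N : ℕ) (t : ℕ → ℝ) (r : ℕ → ℕ)
    (Z : ℕ → ℝ → (Fin d ⊕ Fin d) → ℝ) : Prop :=
  (∀ n ∈ Finset.Icc 1 N, IsPolyDegV (r n) (Z n)) ∧
  ∃ Zh : ℕ → ℝ → (Fin d ⊕ Fin d) → ℝ,
    (∀ n ∈ Finset.Icc 1 N, IsPolyDegV (r n) (Zh n)) ∧
    (∀ n ∈ Finset.Icc 1 (N-1), Zh (n+1) (t n) = Zh n (t n)) ∧
    (∀ n ∈ Finset.Icc 1 N, ∀ s : ℝ,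
       deriv (fun τ => fun i => Zh n τ (Sum.inl i)) s = fun i => Zh n s (Sum.inr i)) ∧
    (∀ n ∈ Finset.Icc 1 N, ∀ v : ℝ → (Fin d ⊕ Fin d) → ℝ, IsPolyDegV (r n) v →
       (∫ s in (t (n-1))..(t n), deriv (Zh n) s ⬝ᵥ v s)
         = (∫ s in (t (n-1))..(t n), deriv (Z n) s ⬝ᵥ v s)
           + (Z n (t (n-1)) - (if n = 1 then Zh 1 (t 0) else Z (n-1) (t (n-1))))
              ⬝ᵥ v (t (n-1))) ∧
    (∀ n ∈ Finset.Icc 2 N, Zh n (t (n-1)) = Z (n-1) (t (n-1)))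

noncomputable def Matrix.PosSemidef.sqrt {n 𝕜 : Type*} [Fintype n] [DecidableEq n] [RCLike 𝕜] [PartialOrder 𝕜]
    {A : Matrix n n 𝕜} (hA : A.PosSemidef) : Matrix n n 𝕜 :=
  (hA.1.eigenvectorUnitary : Matrix n n 𝕜) * diagonal (fun i => (((hA.1.eigenvalues i).sqrt : ℝ) : 𝕜)) *
    (star hA.1.eigenvectorUnitary : Matrix n n 𝕜)

lemma Matrix.PosSemidef.sqrt_mul_self {n : Type*} [Fintype n] [DecidableEq n]
    {A : Matrix n n ℝ} (hA : A.PosSemidef) : hA.sqrt * hA.sqrt = A := by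
  conv_rhs => rw [hA.1.spectral_theorem, Unitary.conjStarAlgAut_apply]
  unfold Matrix.PosSemidef.sqrt
  have hU : (star hA.1.eigenvectorUnitary : Matrix n n ℝ) * (hA.1.eigenvectorUnitary : Matrix n n ℝ) = 1 :=
    Unitary.coe_star_mul_self _
  calc _ = (hA.1.eigenvectorUnitary : Matrix n n ℝ) * (diagonal (fun i => (((hA.1.eigenvalues i).sqrt : ℝ) : ℝ))
        * ((star hA.1.eigenvectorUnitary : Matrix n n ℝ) * (hA.1.eigenvectorUnitary : Matrix n n ℝ))
        * diagonal (fun i => (((hA.1.eigenvalues i).sqrt : ℝ) : ℝ))) * (star hA.1.eigenvectorUnitary : Matrix n n ℝ) := by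
          simp only [mul_assoc]; rfl
    _ = _ := by
      rw [hU, mul_one, diagonal_mul_diagonal]
      congr 3
      funext i
      simp [Real.mul_self_sqrt (hA.eigenvalues_nonneg i)]

open Polynomial

lemma pint (p : Polynomial ℝ) (a b : ℝ) :
    (∫ s in a..b, (derivative p).eval s) = p.eval b - p.eval a := by
  have hde : (deriv fun s : ℝ => p.eval s) = fun s => (derivative p).eval s := by
    funext s; exact p.deriv
  rw [← hde]
  exact intervalIntegral.integral_deriv_eq_sub (fun x _ => p.differentiableAt)
    (by rw [hde]; exact ((derivative p).continuous).intervalIntegrable _ _)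

lemma ibp (f g : Polynomial ℝ) (a b : ℝ) :
    (∫ s in a..b, (derivative f).eval s * g.eval s)
      = f.eval b * g.eval b - f.eval a * g.eval a
        - ∫ s in a..b, f.eval s * (derivative g).eval s := by
  have h := pint (f * g) a b
  have h2 : (∫ s in a..b, (derivative (f*g)).eval s)
      = (∫ s in a..b, (derivative f).eval s * g.eval s)
        + ∫ s in a..b, f.eval s * (derivative g).eval s := by
    rw [← intervalIntegral.integral_add (f := fun s => (derivative f).eval s * g.eval s)
      (g := fun s => f.eval s * (derivative g).eval s)
      (((derivative f).continuous.mul g.continuous).intervalIntegrable _ _)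
      ((f.continuous.mul (derivative g).continuous).intervalIntegrable _ _)]
    congr 1; funext s; simp [derivative_mul]
  rw [h2] at h
  simp only [eval_mul] at h
  linarith

lemma poly_sq_integral_zero {p : Polynomial ℝ} {a b : ℝ} (hab : a < b)
    (h : (∫ s in a..b, (p.eval s)^2) = 0) : p = 0 := by
  by_contra hp
  have hfin : {x | p.IsRoot x}.Finite := finite_setOf_isRoot hp
  rw [intervalIntegral.integral_of_le hab.le] at h
  have hint : Integrable (fun s : ℝ => (p.eval s)^2) (volume.restrict (Set.Ioc a b)) :=
    (p.continuous.pow 2).integrableOn_Ioc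
  have hae := (MeasureTheory.integral_eq_zero_iff_of_nonneg
    (fun s => sq_nonneg _) hint).mp h
  rw [Filter.EventuallyEq, MeasureTheory.ae_restrict_iff' measurableSet_Ioc] at hae
  have hroot : Set.Ioc a b ≤ᵐ[(volume : Measure ℝ)] {x | p.IsRoot x} := by
    filter_upwards [hae] with x hx hmem
    have h2 := hx hmem
    simp only [Pi.zero_apply] at h2
    exact pow_eq_zero_iff (two_ne_zero) |>.mp h2
  have hle : volume (Set.Ioc a b) ≤ volume {x | p.IsRoot x} :=
    measure_mono_ae hroot
  rw [hfin.measure_zero, Real.volume_Ioc] at hle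
  simp only [nonpos_iff_eq_zero, ENNReal.ofReal_eq_zero] at hle
  linarith

lemma exists_antideriv (q : Polynomial ℝ) :
    ∃ Q : Polynomial ℝ, derivative Q = q ∧ Q.natDegree ≤ q.natDegree + 1 := by
  refine ⟨q.sum fun k c => C (c / (k+1)) * X^(k+1), ?_, ?_⟩
  · rw [Polynomial.sum_def, map_sum]
    have key : ∀ k ∈ q.support, derivative (C (q.coeff k / (k+1)) * X^(k+1))
        = C (q.coeff k) * X^k := by
      intro k _
      rw [derivative_C_mul, derivative_X_pow]
      have hk : ((k:ℝ)+1) ≠ 0 := by positivity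
      rw [show (k+1) - 1 = k from rfl, ← mul_assoc, ← C_mul]
      congr 2
      push_cast
      field_simp
    rw [Finset.sum_congr rfl key]
    simp only [C_mul_X_pow_eq_monomial]
    exact q.as_sum_support.symm
  · apply (natDegree_sum_le_of_forall_le _ _ ?_)
    intro k hk
    calc (C (q.coeff k / (k+1)) * X^(k+1)).natDegree
        ≤ (C (q.coeff k / (k+1))).natDegree + (X^(k+1) : Polynomial ℝ).natDegree :=
          natDegree_mul_le
      _ ≤ k + 1 := by simp [natDegree_C, natDegree_X_pow]
      _ ≤ q.natDegree + 1 := by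
          have := le_natDegree_of_mem_supp k hk; omega

lemma leg {a b : ℝ} (hab : a < b) (r : ℕ) (p : Polynomial ℝ)
    (hdeg : p.natDegree ≤ r)
    (horth : ∀ q : Polynomial ℝ, q.natDegree < r → (∫ s in a..b, p.eval s * q.eval s) = 0)
    (hb : p.eval b = 0) : p = 0 := by
  rcases Nat.eq_zero_or_pos r with hr | hr
  · subst hr
    have hp : p = C (p.coeff 0) := eq_C_of_natDegree_le_zero (by omega)
    rw [hp] at hb ⊢
    simp only [eval_C] at hb
    rw [hb]; simp
  set f : Polynomial ℝ := ((X - C a) * (X - C b))^r with hf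
  set ρ : Polynomial ℝ := derivative^[r] f with hρ
  have hfmonic : f.Monic := ((monic_X_sub_C a).mul (monic_X_sub_C b)).pow r
  have hfdeg : f.natDegree = 2*r := by
    rw [hf, natDegree_pow, (monic_X_sub_C a).natDegree_mul (monic_X_sub_C b)]
    simp only [natDegree_X_sub_C]; ring
  have hcoeff : ρ.coeff r = ((r + r).descFactorial r : ℝ) := by
    rw [hρ, coeff_iterate_derivative]
    have h2 : f.coeff (r + r) = 1 := by
      have he : r + r = f.natDegree := by omega
      rw [he]; exact hfmonic
    rw [h2]; simp
  have hcne : ρ.coeff r ≠ 0 := by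
    rw [hcoeff]
    have hpos : (r + r).descFactorial r ≠ 0 := by
      intro h0
      have := Nat.descFactorial_eq_zero_iff_lt.mp h0
      omega
    exact_mod_cast hpos
  have hρdeg : ρ.natDegree ≤ r := by
    have h1 := natDegree_iterate_derivative f r
    rw [← hρ] at h1
    omega
  have hρne : ρ ≠ 0 := fun h0 => hcne (by simp [h0])
  -- boundary vanishing
  have hdvdf : ∀ c ∈ ({a, b} : Set ℝ), (X - C c)^r ∣ f := by
    intro c hc
    have hfe : f = (X - C a)^r * (X - C b)^r := by rw [hf, mul_pow]
    simp only [Set.mem_insert_iff, Set.mem_singleton_iff] at hc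
    rcases hc with rfl | rfl
    · exact hfe ▸ Dvd.intro _ rfl
    · exact hfe ▸ Dvd.intro_left _ rfl
  have hvanish : ∀ c ∈ ({a, b} : Set ℝ), ∀ j, j < r → (derivative^[j] f).eval c = 0 := by
    intro c hc j hj
    have h1 : (X - C c)^(r - j) ∣ derivative^[j] f :=
      pow_sub_dvd_iterate_derivative_of_pow_dvd j (hdvdf c hc)
    have h2 : (X - C c) ∣ derivative^[j] f :=
      dvd_trans (dvd_pow_self _ (by omega)) h1
    exact (dvd_iff_isRoot.mp h2)
  -- iterated integration by parts
  have hibp : ∀ k, k ≤ r → ∀ q : Polynomial ℝ,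
      (∫ s in a..b, (derivative^[k] f).eval s * q.eval s)
        = (-1:ℝ)^k * ∫ s in a..b, f.eval s * (derivative^[k] q).eval s := by
    intro k
    induction k with
    | zero => intro _ q; simp
    | succ k ih =>
      intro hk q
      have hkr : k ≤ r := by omega
      rw [Function.iterate_succ_apply', ibp (derivative^[k] f) q a b,
        hvanish a (by simp) k (by omega), hvanish b (by simp) k (by omega),
        ih hkr (derivative q), ← Function.iterate_succ_apply]
      ring
  have hρorth : ∀ q : Polynomial ℝ, q.natDegree < r →
      (∫ s in a..b, ρ.eval s * q.eval s) = 0 := by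
    intro q hq
    rw [hρ, hibp r le_rfl q, iterate_derivative_eq_zero hq]
    simp
  -- nonvanishing of derivatives of f
  have hne : ∀ k, k ≤ r → derivative^[k] f ≠ 0 := by
    intro k hk h0
    have hc := coeff_iterate_derivative f (k := k) (2*r - k)
    rw [h0, coeff_zero] at hc
    have h2 : 2*r - k + k = 2*r := by omega
    rw [h2] at hc
    have h3 : f.coeff (2*r) = 1 := by rw [← hfdeg]; exact hfmonic.coeff_natDegree
    rw [h3] at hc
    simp only [nsmul_eq_mul, mul_one] at hc
    have hpos : (2*r).descFactorial k ≠ 0 := by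
      intro hz
      have := Nat.descFactorial_eq_zero_iff_lt.mp hz
      omega
    exact (by exact_mod_cast hpos : ((2*r).descFactorial k : ℝ) ≠ 0) hc.symm
  -- root multiplicity chain at b
  have hmult : ∀ k, k ≤ r → rootMultiplicity b (derivative^[k] f) = r - k := by
    intro k
    induction k with
    | zero =>
      intro _
      simp only [Function.iterate_zero, id_eq, Nat.sub_zero]
      have hfe : f = (X - C a)^r * (X - C b)^r := by rw [hf, mul_pow]
      rw [hfe, rootMultiplicity_mul (by rw [← hfe]; exact hne 0 (by omega))]
      have h1 : rootMultiplicity b ((X - C a)^r) = 0 := by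
        apply rootMultiplicity_eq_zero
        simp only [IsRoot, eval_pow, eval_sub, eval_X, eval_C]
        intro hcon
        have := pow_eq_zero_iff (by omega : r ≠ 0) |>.mp hcon
        linarith
      rw [h1, rootMultiplicity_X_sub_C_pow]
      omega
    | succ k ih =>
      intro hk
      have hkr : k ≤ r := by omega
      have hroot : (derivative^[k] f).IsRoot b := by
        rw [← rootMultiplicity_pos (hne k hkr), ih hkr]
        omega
      rw [Function.iterate_succ_apply', derivative_rootMultiplicity_of_root hroot, ih hkr]
      omega
  have hevalb : ρ.eval b ≠ 0 := by
    intro h0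
    have h1 := hmult r le_rfl
    have h2 : 0 < rootMultiplicity b ρ :=
      (rootMultiplicity_pos hρne).mpr h0
    rw [hρ] at h2
    omega
  -- final assembly
  set g : Polynomial ℝ := ρ.coeff r • p - p.coeff r • ρ with hg
  have hgcoeff : g.coeff r = 0 := by
    simp only [hg, coeff_sub, coeff_smul, smul_eq_mul]
    ring
  have hgdeg : g.natDegree ≤ r := by
    refine le_trans (natDegree_sub_le _ _) (max_le ?_ ?_)
    · exact le_trans (natDegree_smul_le _ _) hdeg
    · exact le_trans (natDegree_smul_le _ _) hρdeg
  have hgzero : g = 0 := by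
    rcases eq_or_ne g 0 with h0 | h0
    · exact h0
    have hdlt : g.natDegree < r := by
      rcases lt_or_eq_of_le hgdeg with h1 | h1
      · exact h1
      exfalso
      have hl : g.leadingCoeff ≠ 0 := leadingCoeff_ne_zero.mpr h0
      rw [leadingCoeff, h1, hgcoeff] at hl
      exact hl rfl
    have horthg : (∫ s in a..b, g.eval s * g.eval s) = 0 := by
      have e1 : ∀ s : ℝ, g.eval s * g.eval s
          = ρ.coeff r * (p.eval s * g.eval s) - p.coeff r * (ρ.eval s * g.eval s) := by
        intro s
        simp only [hg, eval_sub, eval_smul, smul_eq_mul]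
        ring
      simp only [e1]
      rw [intervalIntegral.integral_sub
        (by exact (((continuous_const.mul (p.continuous.mul g.continuous))).intervalIntegrable _ _))
        (by exact (((continuous_const.mul (ρ.continuous.mul g.continuous))).intervalIntegrable _ _)),
        intervalIntegral.integral_const_mul, intervalIntegral.integral_const_mul,
        horth g hdlt, hρorth g hdlt]
      ring
    have hg0 : g = 0 := poly_sq_integral_zero hab (by simpa only [pow_two] using horthg)
    exact hg0
  have heq : ρ.coeff r • p = p.coeff r • ρ := sub_eq_zero.mp hgzero
  have hevb : ρ.coeff r * p.eval b = p.coeff r * ρ.eval b := by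
    have := congrArg (fun q : Polynomial ℝ => q.eval b) heq
    simpa [eval_smul, smul_eq_mul] using this
  rw [hb, mul_zero] at hevb
  have hpc : p.coeff r = 0 := by
    rcases mul_eq_zero.mp hevb.symm with h1 | h1
    · exact h1
    · exact absurd h1 hevalb
  rw [hpc, zero_smul] at heq
  rcases smul_eq_zero.mp heq with h1 | h1
  · exact absurd h1 hcne
  · exact h1

lemma esq_nonneg {ι : Type*} [Fintype ι] (v : ι → ℝ) : 0 ≤ esq v :=
  Finset.sum_nonneg fun i _ => sq_nonneg _

lemma esq_eq_zero {ι : Type*} [Fintype ι] {v : ι → ℝ} (h : esq v = 0) : ∀ i, v i = 0 := by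
  intro i
  have h2 := (Finset.sum_eq_zero_iff_of_nonneg (fun j _ => sq_nonneg (v j))).mp h i
    (Finset.mem_univ i)
  exact pow_eq_zero_iff two_ne_zero |>.mp h2

lemma esq_add {ι : Type*} [Fintype ι] (u v : ι → ℝ) :
    esq (u + v) = esq u + 2 * (u ⬝ᵥ v) + esq v := by
  simp only [esq, dotProduct, Pi.add_apply, Finset.mul_sum, ← Finset.sum_add_distrib]
  exact Finset.sum_congr rfl fun i _ => by ring

lemma esq_smul {ι : Type*} [Fintype ι] (c : ℝ) (v : ι → ℝ) :
    esq (c • v) = c^2 * esq v := by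
  simp only [esq, Pi.smul_apply, smul_eq_mul, Finset.mul_sum]
  exact Finset.sum_congr rfl fun i _ => by ring

lemma dot_smul_right {ι : Type*} [Fintype ι] (c : ℝ) (u v : ι → ℝ) :
    (u ⬝ᵥ c • v) = c * (u ⬝ᵥ v) := by
  simp only [dotProduct, Pi.smul_apply, smul_eq_mul, Finset.mul_sum]
  exact Finset.sum_congr rfl fun i _ => by ring

lemma posdef_mulvec_eq_zero {n : Type*} [Fintype n] [DecidableEq n]
    {A : Matrix n n ℝ} (hA : A.PosDef) {v : n → ℝ} (h : A.mulVec v = 0) : v = 0 := by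
  by_contra hv
  have h2 := hA.dotProduct_mulVec_pos hv
  rw [h] at h2
  simp only [dotProduct_zero] at h2
  exact lt_irrefl _ h2

lemma posdef_sqrt_mulvec_eq_zero {n : Type*} [Fintype n] [DecidableEq n]
    {A : Matrix n n ℝ} (hA : A.PosDef) {v : n → ℝ}
    (h : hA.posSemidef.sqrt.mulVec v = 0) : v = 0 := by
  apply posdef_mulvec_eq_zero hA
  have h2 := congrArg (hA.posSemidef.sqrt.mulVec) h
  rwa [Matrix.mulVec_mulVec, hA.posSemidef.sqrt_mul_self, Matrix.mulVec_zero] at h2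

lemma posdef_sqrt_esq_eq_zero {n : Type*} [Fintype n] [DecidableEq n]
    {A : Matrix n n ℝ} (hA : A.PosDef) {v : n → ℝ}
    (h : esq (hA.posSemidef.sqrt.mulVec v) = 0) : v = 0 :=
  posdef_sqrt_mulvec_eq_zero hA (funext fun i => esq_eq_zero h i)

lemma esq_Ltil {d : ℕ} (S : Matrix (Fin d) (Fin d) ℝ) (z : (Fin d ⊕ Fin d) → ℝ) :
    esq ((Matrix.fromBlocks (0 : Matrix (Fin d) (Fin d) ℝ) 0 0 S).mulVec z) = esq (S.mulVec (z ∘ Sum.inr)) := by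
  rw [Matrix.fromBlocks_mulVec]
  simp only [esq, Fintype.sum_sum_type, Sum.elim_inl, Sum.elim_inr, Matrix.zero_mulVec,
    Pi.add_apply, Pi.zero_apply, zero_add, add_zero]
  simp

lemma deriv_of_polyVec {ι : Type*} [Fintype ι] {F : ℝ → ι → ℝ} {p : ι → Polynomial ℝ}
    (h : ∀ i s, F s i = (p i).eval s) (s : ℝ) :
    deriv F s = fun i => (derivative (p i)).eval s := by
  have hF : ∀ i, (fun τ => F τ i) = fun τ => (p i).eval τ := fun i => funext fun τ => h i τ
  rw [deriv_pi]
  · funext i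
    have h2 : deriv (fun τ => F τ i) s = deriv (fun τ => (p i).eval τ) s := by rw [hF i]
    rw [h2, Polynomial.deriv]
  · intro i
    rw [hF i]
    exact (p i).differentiableAt

lemma dot_single {ι : Type*} [Fintype ι] [DecidableEq ι] (x : ι → ℝ) (i0 : ι) (c : ℝ) :
    (x ⬝ᵥ fun k => if k = i0 then c else 0) = x i0 * c := by
  simp only [dotProduct, mul_ite, mul_zero]
  rw [Finset.sum_ite_eq' Finset.univ i0 (fun k => x k * c)]
  simp

lemma ident_single {d : ℕ} {F G : ℝ → (Fin d ⊕ Fin d) → ℝ} {J : (Fin d ⊕ Fin d) → ℝ}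
    {pF pG : (Fin d ⊕ Fin d) → Polynomial ℝ} {a b : ℝ} {rr : ℕ}
    (hF : ∀ i s, F s i = (pF i).eval s) (hG : ∀ i s, G s i = (pG i).eval s)
    (hid : ∀ v : ℝ → (Fin d ⊕ Fin d) → ℝ, IsPolyDegV rr v →
       (∫ s in a..b, deriv F s ⬝ᵥ v s) = (∫ s in a..b, deriv G s ⬝ᵥ v s) + J ⬝ᵥ v a)
    (i0 : Fin d ⊕ Fin d) (q : Polynomial ℝ) (hq : q.natDegree ≤ rr) :
    (∫ s in a..b, (derivative (pF i0)).eval s * q.eval s)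
      = (∫ s in a..b, (derivative (pG i0)).eval s * q.eval s) + J i0 * q.eval a := by
  have hvp : IsPolyDegV rr (fun s k => if k = i0 then q.eval s else 0) := by
    intro k
    by_cases hk : k = i0
    · exact ⟨q, hq, fun s => by simp [hk]⟩
    · exact ⟨0, by simp, fun s => by simp [hk]⟩
  have h := hid _ hvp
  have e1 : ∀ s : ℝ, (deriv F s ⬝ᵥ fun k => if k = i0 then q.eval s else 0)
      = (derivative (pF i0)).eval s * q.eval s := by
    intro s
    rw [deriv_of_polyVec hF s, dot_single]
  have e2 : ∀ s : ℝ, (deriv G s ⬝ᵥ fun k => if k = i0 then q.eval s else 0)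
      = (derivative (pG i0)).eval s * q.eval s := by
    intro s
    rw [deriv_of_polyVec hG s, dot_single]
  simp only [e1, e2, dot_single] at h
  exact h

lemma cont_comp {d r : ℕ} {Z : ℝ → (Fin d ⊕ Fin d) → ℝ} (hZ : IsPolyDegV r Z)
    (i : Fin d ⊕ Fin d) : Continuous fun s => Z s i := by
  obtain ⟨p, _, hp⟩ := hZ i
  have h : (fun s => Z s i) = fun s => p.eval s := funext hp
  rw [h]; exact p.continuous

lemma cont_esq_mulVec {ι : Type*} [Fintype ι] (M : Matrix ι ι ℝ) {Z : ℝ → ι → ℝ}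
    (hc : ∀ i, Continuous fun s => Z s i) :
    Continuous fun s => esq (M.mulVec (Z s)) := by
  simp only [esq, Matrix.mulVec, dotProduct]
  exact continuous_finset_sum _ fun i _ =>
    (continuous_finset_sum _ fun j _ => continuous_const.mul (hc j)).pow 2

lemma cont_dot_mulVec {ι : Type*} [Fintype ι] (M : Matrix ι ι ℝ) {Z Y : ℝ → ι → ℝ}
    (hcZ : ∀ i, Continuous fun s => Z s i) (hcY : ∀ i, Continuous fun s => Y s i) :
    Continuous fun s => (M.mulVec (Z s)) ⬝ᵥ (M.mulVec (Y s)) := by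
  simp only [Matrix.mulVec, dotProduct]
  exact continuous_finset_sum _ fun i _ =>
    (continuous_finset_sum _ fun j _ => continuous_const.mul (hcZ j)).mul
      (continuous_finset_sum _ fun j _ => continuous_const.mul (hcY j))

noncomputable def dgBil {d : ℕ} (Ltil Ksqrt : Matrix (Fin d ⊕ Fin d) (Fin d ⊕ Fin d) ℝ)
    (N : ℕ) (t : ℕ → ℝ) (Z Y : ℕ → ℝ → (Fin d ⊕ Fin d) → ℝ) : ℝ :=
  (∑ n ∈ Finset.Icc 1 N, ∫ s in (t (n-1))..(t n),
      (Ltil.mulVec (Z n s)) ⬝ᵥ (Ltil.mulVec (Y n s)))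
  + (1/2) * ((Ksqrt.mulVec (Z 1 (t 0))) ⬝ᵥ (Ksqrt.mulVec (Y 1 (t 0))))
  + (1/2) * ∑ n ∈ Finset.Icc 1 (N-1),
      (Ksqrt.mulVec (Z (n+1) (t n) - Z n (t n))) ⬝ᵥ (Ksqrt.mulVec (Y (n+1) (t n) - Y n (t n)))
  + (1/2) * ((Ksqrt.mulVec (Z N (t N))) ⬝ᵥ (Ksqrt.mulVec (Y N (t N))))

lemma dg_expand {d N : ℕ} (Lt Ks : Matrix (Fin d ⊕ Fin d) (Fin d ⊕ Fin d) ℝ)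
    {t : ℕ → ℝ} {Z Y : ℕ → ℝ → (Fin d ⊕ Fin d) → ℝ}
    (hZc : ∀ n ∈ Finset.Icc 1 N, ∀ i, Continuous fun s => Z n s i)
    (hYc : ∀ n ∈ Finset.Icc 1 N, ∀ i, Continuous fun s => Y n s i) :
    dgNormSq Lt Ks N t (fun n τ => Z n τ + Y n τ)
      = dgNormSq Lt Ks N t Z + 2 * dgBil Lt Ks N t Z Y + dgNormSq Lt Ks N t Y := by
  unfold dgNormSq dgBil
  have hInt : (∑ n ∈ Finset.Icc 1 N, ∫ s in (t (n-1))..(t n),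
        esq (Lt.mulVec (Z n s + Y n s)))
      = (∑ n ∈ Finset.Icc 1 N, ∫ s in (t (n-1))..(t n), esq (Lt.mulVec (Z n s)))
        + (∑ n ∈ Finset.Icc 1 N, ∫ s in (t (n-1))..(t n),
            2 * ((Lt.mulVec (Z n s)) ⬝ᵥ (Lt.mulVec (Y n s))))
        + (∑ n ∈ Finset.Icc 1 N, ∫ s in (t (n-1))..(t n), esq (Lt.mulVec (Y n s))) := by
    rw [← Finset.sum_add_distrib, ← Finset.sum_add_distrib]
    apply Finset.sum_congr rfl
    intro n hn
    have hi1 : IntervalIntegrable (fun s => esq (Lt.mulVec (Z n s))) volume (t (n-1)) (t n) :=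
      (cont_esq_mulVec Lt (hZc n hn)).intervalIntegrable _ _
    have hi2 : IntervalIntegrable
        (fun s => 2 * ((Lt.mulVec (Z n s)) ⬝ᵥ (Lt.mulVec (Y n s)))) volume (t (n-1)) (t n) :=
      (continuous_const.mul (cont_dot_mulVec Lt (hZc n hn) (hYc n hn))).intervalIntegrable _ _
    have hi3 : IntervalIntegrable (fun s => esq (Lt.mulVec (Y n s))) volume (t (n-1)) (t n) :=
      (cont_esq_mulVec Lt (hYc n hn)).intervalIntegrable _ _
    have e1 : ∀ s : ℝ, esq (Lt.mulVec (Z n s + Y n s))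
        = esq (Lt.mulVec (Z n s)) + 2 * ((Lt.mulVec (Z n s)) ⬝ᵥ (Lt.mulVec (Y n s)))
          + esq (Lt.mulVec (Y n s)) := by
      intro s; rw [Matrix.mulVec_add, esq_add]
    simp only [e1]
    rw [intervalIntegral.integral_add (hi1.add hi2) hi3,
      intervalIntegral.integral_add hi1 hi2]
  have hjump : ∀ n : ℕ,
      (Z (n+1) (t n) + Y (n+1) (t n)) - (Z n (t n) + Y n (t n))
        = (Z (n+1) (t n) - Z n (t n)) + (Y (n+1) (t n) - Y n (t n)) := by
    intro n; abel
  have hJ : (∑ n ∈ Finset.Icc 1 (N-1),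
        esq (Ks.mulVec ((Z (n+1) (t n) + Y (n+1) (t n)) - (Z n (t n) + Y n (t n)))))
      = (∑ n ∈ Finset.Icc 1 (N-1), esq (Ks.mulVec (Z (n+1) (t n) - Z n (t n))))
        + 2 * (∑ n ∈ Finset.Icc 1 (N-1),
            (Ks.mulVec (Z (n+1) (t n) - Z n (t n))) ⬝ᵥ (Ks.mulVec (Y (n+1) (t n) - Y n (t n))))
        + (∑ n ∈ Finset.Icc 1 (N-1), esq (Ks.mulVec (Y (n+1) (t n) - Y n (t n)))) := by
    rw [Finset.mul_sum, ← Finset.sum_add_distrib, ← Finset.sum_add_distrib]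
    apply Finset.sum_congr rfl
    intro n _
    rw [hjump n, Matrix.mulVec_add, esq_add]
  rw [hInt, hJ, Matrix.mulVec_add, esq_add, Matrix.mulVec_add, esq_add]
  have h2 : (∑ n ∈ Finset.Icc 1 N, ∫ s in (t (n-1))..(t n),
      2 * ((Lt.mulVec (Z n s)) ⬝ᵥ (Lt.mulVec (Y n s))))
      = 2 * ∑ n ∈ Finset.Icc 1 N, ∫ s in (t (n-1))..(t n),
          (Lt.mulVec (Z n s)) ⬝ᵥ (Lt.mulVec (Y n s)) := by
    rw [Finset.mul_sum]
    exact Finset.sum_congr rfl fun n _ => intervalIntegral.integral_const_mul _ _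
  rw [h2]
  ring

lemma dg_smul {d N : ℕ} (Lt Ks : Matrix (Fin d ⊕ Fin d) (Fin d ⊕ Fin d) ℝ)
    (t : ℕ → ℝ) (Z : ℕ → ℝ → (Fin d ⊕ Fin d) → ℝ) (c : ℝ) :
    dgNormSq Lt Ks N t (fun n τ => c • Z n τ) = c^2 * dgNormSq Lt Ks N t Z := by
  unfold dgNormSq
  have e : ∀ (v : (Fin d ⊕ Fin d) → ℝ) (M : Matrix (Fin d ⊕ Fin d) (Fin d ⊕ Fin d) ℝ),
      esq (M.mulVec (c • v)) = c^2 * esq (M.mulVec v) := by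
    intro v M; rw [Matrix.mulVec_smul, esq_smul]
  have hInt : (∑ n ∈ Finset.Icc 1 N, ∫ s in (t (n-1))..(t n), esq (Lt.mulVec (c • Z n s)))
      = c^2 * ∑ n ∈ Finset.Icc 1 N, ∫ s in (t (n-1))..(t n), esq (Lt.mulVec (Z n s)) := by
    rw [Finset.mul_sum]
    apply Finset.sum_congr rfl
    intro n _
    simp only [e]
    exact intervalIntegral.integral_const_mul _ _
  have hJ : (∑ n ∈ Finset.Icc 1 (N-1), esq (Ks.mulVec (c • Z (n+1) (t n) - c • Z n (t n))))
      = c^2 * ∑ n ∈ Finset.Icc 1 (N-1), esq (Ks.mulVec (Z (n+1) (t n) - Z n (t n))) := by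
    rw [Finset.mul_sum]
    apply Finset.sum_congr rfl
    intro n _
    rw [← smul_sub, e]
  rw [hInt, hJ, e, e]
  ring

lemma dgBil_smul_right {d N : ℕ} (Lt Ks : Matrix (Fin d ⊕ Fin d) (Fin d ⊕ Fin d) ℝ)
    (t : ℕ → ℝ) (Z Y : ℕ → ℝ → (Fin d ⊕ Fin d) → ℝ) (c : ℝ) :
    dgBil Lt Ks N t Z (fun n τ => c • Y n τ) = c * dgBil Lt Ks N t Z Y := by
  unfold dgBil
  have e : ∀ (u v : (Fin d ⊕ Fin d) → ℝ) (M : Matrix (Fin d ⊕ Fin d) (Fin d ⊕ Fin d) ℝ),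
      (M.mulVec u) ⬝ᵥ (M.mulVec (c • v)) = c * ((M.mulVec u) ⬝ᵥ (M.mulVec v)) := by
    intro u v M; rw [Matrix.mulVec_smul, dot_smul_right]
  have hInt : (∑ n ∈ Finset.Icc 1 N, ∫ s in (t (n-1))..(t n),
        (Lt.mulVec (Z n s)) ⬝ᵥ (Lt.mulVec (c • Y n s)))
      = c * ∑ n ∈ Finset.Icc 1 N, ∫ s in (t (n-1))..(t n),
          (Lt.mulVec (Z n s)) ⬝ᵥ (Lt.mulVec (Y n s)) := by
    rw [Finset.mul_sum]
    apply Finset.sum_congr rfl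
    intro n _
    simp only [e]
    exact intervalIntegral.integral_const_mul _ _
  have hJ : (∑ n ∈ Finset.Icc 1 (N-1),
        (Ks.mulVec (Z (n+1) (t n) - Z n (t n))) ⬝ᵥ (Ks.mulVec (c • Y (n+1) (t n) - c • Y n (t n))))
      = c * ∑ n ∈ Finset.Icc 1 (N-1),
          (Ks.mulVec (Z (n+1) (t n) - Z n (t n))) ⬝ᵥ (Ks.mulVec (Y (n+1) (t n) - Y n (t n))) := by
    rw [Finset.mul_sum]
    apply Finset.sum_congr rfl
    intro n _
    rw [← smul_sub, e]
  rw [hInt, hJ, e, e]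
  ring

lemma t_lt {N : ℕ} {t : ℕ → ℝ} (hmono : ∀ n < N, t n < t (n+1)) {n : ℕ}
    (h1 : 1 ≤ n) (h2 : n ≤ N) : t (n-1) < t n := by
  have h := hmono (n-1) (by omega)
  rwa [Nat.sub_add_cancel h1] at h

lemma dg_nonneg {d N : ℕ} (Lt Ks : Matrix (Fin d ⊕ Fin d) (Fin d ⊕ Fin d) ℝ)
    (t : ℕ → ℝ) (hmono : ∀ n < N, t n < t (n+1)) (Z : ℕ → ℝ → (Fin d ⊕ Fin d) → ℝ) :
    0 ≤ dgNormSq Lt Ks N t Z := by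
  unfold dgNormSq
  have h1 : 0 ≤ ∑ n ∈ Finset.Icc 1 N, ∫ s in (t (n-1))..(t n), esq (Lt.mulVec (Z n s)) := by
    apply Finset.sum_nonneg
    intro n hn
    rw [Finset.mem_Icc] at hn
    exact intervalIntegral.integral_nonneg (t_lt hmono hn.1 hn.2).le fun u _ => esq_nonneg _
  have h2 : 0 ≤ ∑ n ∈ Finset.Icc 1 (N-1), esq (Ks.mulVec (Z (n+1) (t n) - Z n (t n))) :=
    Finset.sum_nonneg fun n _ => esq_nonneg _
  have h3 := esq_nonneg (Ks.mulVec (Z 1 (t 0)))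
  have h4 := esq_nonneg (Ks.mulVec (Z N (t N)))
  linarith



lemma dg_definite {d N : ℕ} (hN : 1 ≤ N)
    {L : Matrix (Fin d) (Fin d) ℝ} (hL : L.PosDef)
    {A : Matrix (Fin d ⊕ Fin d) (Fin d ⊕ Fin d) ℝ} (hKP : A.PosDef)
    {t : ℕ → ℝ} (hmono : ∀ n < N, t n < t (n+1)) {r : ℕ → ℕ}
    {Z : ℕ → ℝ → (Fin d ⊕ Fin d) → ℝ} (hZ : MemDG N t r Z)
    (hQ : dgNormSq (Matrix.fromBlocks 0 0 0 hL.posSemidef.sqrt) hKP.posSemidef.sqrt N t Z = 0) :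
    ∀ n ∈ Finset.Icc 1 N, ∀ s : ℝ, Z n s = 0 := by
  obtain ⟨hZpoly, Zh, hZhpoly, hcont, hode, hident, hmatch⟩ := hZ
  set SL := hL.posSemidef.sqrt with hSL
  set Ks := hKP.posSemidef.sqrt with hKs
  set Lt : Matrix (Fin d ⊕ Fin d) (Fin d ⊕ Fin d) ℝ := Matrix.fromBlocks 0 0 0 SL with hLt
  have hab : ∀ n, 1 ≤ n → n ≤ N → t (n-1) < t n := fun n h1 h2 => t_lt hmono h1 h2
  have hS1 : 0 ≤ ∑ n ∈ Finset.Icc 1 N, ∫ s in (t (n-1))..(t n), esq (Lt.mulVec (Z n s)) := by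
    apply Finset.sum_nonneg
    intro n hn
    rw [Finset.mem_Icc] at hn
    exact intervalIntegral.integral_nonneg (hab n hn.1 hn.2).le fun u _ => esq_nonneg _
  have hSJ : 0 ≤ ∑ n ∈ Finset.Icc 1 (N-1), esq (Ks.mulVec (Z (n+1) (t n) - Z n (t n))) :=
    Finset.sum_nonneg fun n _ => esq_nonneg _
  have h0' := esq_nonneg (Ks.mulVec (Z 1 (t 0)))
  have hT' := esq_nonneg (Ks.mulVec (Z N (t N)))
  unfold dgNormSq at hQ
  have hInt0 : ∑ n ∈ Finset.Icc 1 N, ∫ s in (t (n-1))..(t n), esq (Lt.mulVec (Z n s)) = 0 := by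
    linarith
  have he0 : esq (Ks.mulVec (Z 1 (t 0))) = 0 := by linarith
  have heJ : ∑ n ∈ Finset.Icc 1 (N-1), esq (Ks.mulVec (Z (n+1) (t n) - Z n (t n))) = 0 := by
    linarith
  have heT : esq (Ks.mulVec (Z N (t N))) = 0 := by linarith
  have hz0 : Z 1 (t 0) = 0 := posdef_sqrt_esq_eq_zero hKP he0
  have hzT : Z N (t N) = 0 := posdef_sqrt_esq_eq_zero hKP heT
  have hjump : ∀ m ∈ Finset.Icc 1 (N-1), Z (m+1) (t m) = Z m (t m) := by
    intro m hm
    have h1 := (Finset.sum_eq_zero_iff_of_nonneg (fun n _ => esq_nonneg _)).mp heJ m hm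
    have h2 := posdef_sqrt_esq_eq_zero hKP h1
    exact sub_eq_zero.mp h2
  -- the w-components of Z vanish identically
  have hw : ∀ n ∈ Finset.Icc 1 N, ∀ (s : ℝ) (j : Fin d), Z n s (Sum.inr j) = 0 := by
    intro n hnIcc
    have hn := Finset.mem_Icc.mp hnIcc
    have hI : (∫ s in (t (n-1))..(t n), esq (Lt.mulVec (Z n s))) = 0 :=
      (Finset.sum_eq_zero_iff_of_nonneg (fun m hm => by
        rw [Finset.mem_Icc] at hm
        exact intervalIntegral.integral_nonneg (hab m hm.1 hm.2).le
          fun u _ => esq_nonneg _)).mp hInt0 n hnIcc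
    choose pZ hdZ heZ using hZpoly n hnIcc
    set q : Fin d → Polynomial ℝ :=
      fun i => ∑ j, Polynomial.C (SL i j) * pZ (Sum.inr j) with hq
    have hqe : ∀ (i : Fin d) (s : ℝ),
        (SL.mulVec (fun j => Z n s (Sum.inr j))) i = (q i).eval s := by
      intro i s
      simp only [hq, Matrix.mulVec, dotProduct, eval_finset_sum, eval_mul, eval_C]
      exact Finset.sum_congr rfl fun j _ => by rw [heZ (Sum.inr j) s]
    have hesq : ∀ s : ℝ, esq (Lt.mulVec (Z n s)) = ∑ i, ((q i).eval s)^2 := by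
      intro s
      rw [hLt, esq_Ltil]
      unfold esq
      exact Finset.sum_congr rfl fun i _ => by
        rw [show (Z n s ∘ Sum.inr) = fun j => Z n s (Sum.inr j) from rfl, hqe i s]
    simp only [hesq] at hI
    rw [intervalIntegral.integral_finset_sum (f := fun i s => (q i).eval s ^ 2)
      (fun i _ => (((q i).continuous).pow 2).intervalIntegrable _ _)] at hI
    have hqi : ∀ i, q i = 0 := by
      intro i
      apply poly_sq_integral_zero (hab n hn.1 hn.2)
      exact (Finset.sum_eq_zero_iff_of_nonneg (fun i _ =>
        intervalIntegral.integral_nonneg (hab n hn.1 hn.2).le fun u _ => sq_nonneg _)).mp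
        hI i (Finset.mem_univ i)
    intro s j
    have hSw : SL.mulVec (fun j => Z n s (Sum.inr j)) = 0 := funext fun i => by
      rw [hqe i s, hqi i]; simp
    rw [hSL] at hSw
    exact congrFun (posdef_sqrt_mulvec_eq_zero hL hSw) j
  -- the w-components of the reconstruction vanish identically
  have hwhat : ∀ n ∈ Finset.Icc 1 N, ∀ (s : ℝ) (j : Fin d), Zh n s (Sum.inr j) = 0 := by
    intro n hnIcc
    have hn := Finset.mem_Icc.mp hnIcc
    have habn : t (n-1) < t n := hab n hn.1 hn.2
    choose pZ hdZ heZ using hZpoly n hnIcc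
    choose pZh hdZh heZh using hZhpoly n hnIcc
    have key : ∀ (i0 : Fin d ⊕ Fin d) (q : Polynomial ℝ), q.natDegree ≤ r n →
        (∫ s in (t (n-1))..(t n), (derivative (pZh i0)).eval s * q.eval s)
          = (∫ s in (t (n-1))..(t n), (derivative (pZ i0)).eval s * q.eval s)
            + (Z n (t (n-1)) - (if n = 1 then Zh 1 (t 0) else Z (n-1) (t (n-1)))) i0
              * q.eval (t (n-1)) :=
      fun i0 q hq => ident_single (fun i s => heZh i s) (fun i s => heZ i s)
        (hident n hnIcc) i0 q hq
    intro s j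
    have hpZr : derivative (pZ (Sum.inr j)) = 0 := by
      have hz : pZ (Sum.inr j) = 0 := Polynomial.funext fun x => by
        rw [← heZ (Sum.inr j) x, hw n hnIcc x j, eval_zero]
      rw [hz]; simp
    by_cases hn1 : n = 1
    · -- first slab: Legendre-type argument
      subst hn1
      have ht01 : t (1-1) = t 0 := by norm_num
      have hab1 : t 0 < t 1 := ht01 ▸ hab 1 le_rfl hn.2
      have hkey1 : ∀ q : Polynomial ℝ, q.natDegree ≤ r 1 →
          (∫ x in (t 0)..(t 1), (derivative (pZh (Sum.inr j))).eval x * q.eval x)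
            = - ((pZh (Sum.inr j)).eval (t 0) * q.eval (t 0)) := by
        intro q hq
        have h := key (Sum.inr j) q hq
        rw [ht01, hz0, if_pos rfl] at h
        simp only [hpZr, eval_zero, zero_mul, intervalIntegral.integral_zero, zero_add,
          Pi.sub_apply, Pi.zero_apply, zero_sub] at h
        rw [heZh (Sum.inr j) (t 0)] at h
        rw [h]; ring
      have hb1 : (pZh (Sum.inr j)).eval (t 1) = 0 := by
        have h := hkey1 1 (by simp)
        simp only [eval_one, mul_one] at h
        rw [pint (pZh (Sum.inr j)) (t 0) (t 1)] at h
        linarith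
      have horth : ∀ q : Polynomial ℝ, q.natDegree < r 1 →
          (∫ x in (t 0)..(t 1), (pZh (Sum.inr j)).eval x * q.eval x) = 0 := by
        intro q hq
        obtain ⟨Q, hQd, hQdeg⟩ := exists_antideriv q
        have h2 := hkey1 Q (by omega)
        have h3 := ibp (pZh (Sum.inr j)) Q (t 0) (t 1)
        rw [hQd, hb1, h2] at h3
        linarith
      have hp0 : pZh (Sum.inr j) = 0 :=
        leg hab1 (r 1) _ (hdZh (Sum.inr j)) horth hb1
      rw [heZh (Sum.inr j) s, hp0, eval_zero]
    · -- later slabs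
      have hn2 : 2 ≤ n := by omega
      have hJ0 : (Z n (t (n-1)) - (if n = 1 then Zh 1 (t 0) else Z (n-1) (t (n-1))))
          (Sum.inr j) = 0 := by
        rw [if_neg hn1, Pi.sub_apply, hw n hnIcc (t (n-1)) j,
          hw (n-1) (Finset.mem_Icc.mpr ⟨by omega, by omega⟩) (t (n-1)) j, sub_zero]
      have hint : ∀ q : Polynomial ℝ, q.natDegree ≤ r n →
          (∫ x in (t (n-1))..(t n), (derivative (pZh (Sum.inr j))).eval x * q.eval x) = 0 := by
        intro q hq
        have h := key (Sum.inr j) q hq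
        rw [hJ0, hpZr] at h
        simpa using h
      have hder0 : derivative (pZh (Sum.inr j)) = 0 := by
        apply poly_sq_integral_zero habn
        have hdd : (derivative (pZh (Sum.inr j))).natDegree ≤ r n := by
          have h1 := natDegree_derivative_le (pZh (Sum.inr j))
          have h2 := hdZh (Sum.inr j)
          omega
        have h := hint (derivative (pZh (Sum.inr j))) hdd
        simpa [pow_two] using h
      have hconst := Polynomial.eq_C_of_natDegree_le_zero
        (natDegree_eq_zero_of_derivative_eq_zero hder0).le
      have hval : (pZh (Sum.inr j)).eval (t (n-1)) = 0 := by
        rw [← heZh (Sum.inr j) (t (n-1)),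
          congrFun (hmatch n (Finset.mem_Icc.mpr ⟨hn2, hn.2⟩)) (Sum.inr j)]
        exact hw (n-1) (Finset.mem_Icc.mpr ⟨by omega, by omega⟩) (t (n-1)) j
      rw [hconst, eval_C] at hval
      rw [heZh (Sum.inr j) s, hconst, eval_C, hval]
  -- on slabs n ≥ 2 the u-components are constant
  have hconst2 : ∀ n, 2 ≤ n → n ≤ N → ∀ (i : Fin d) (s u : ℝ),
      Z n s (Sum.inl i) = Z n u (Sum.inl i) := by
    intro n hn2 hnN i s u
    have hnIcc : n ∈ Finset.Icc 1 N := Finset.mem_Icc.mpr ⟨by omega, hnN⟩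
    choose pZ hdZ heZ using hZpoly n hnIcc
    choose pZh hdZh heZh using hZhpoly n hnIcc
    have key : ∀ (i0 : Fin d ⊕ Fin d) (q : Polynomial ℝ), q.natDegree ≤ r n →
        (∫ s in (t (n-1))..(t n), (derivative (pZh i0)).eval s * q.eval s)
          = (∫ s in (t (n-1))..(t n), (derivative (pZ i0)).eval s * q.eval s)
            + (Z n (t (n-1)) - (if n = 1 then Zh 1 (t 0) else Z (n-1) (t (n-1)))) i0
              * q.eval (t (n-1)) :=
      fun i0 q hq => ident_single (fun i s => heZh i s) (fun i s => heZ i s)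
        (hident n hnIcc) i0 q hq
    have hodei : ∀ s' : ℝ, (derivative (pZh (Sum.inl i))).eval s' = 0 := by
      intro s'
      have h1 := hode n hnIcc s'
      rw [deriv_of_polyVec (F := fun τ k => Zh n τ (Sum.inl k))
        (p := fun k => pZh (Sum.inl k)) (fun k s => heZh (Sum.inl k) s) s'] at h1
      have h3 := congrFun h1 i
      rw [h3]
      exact hwhat n hnIcc s' i
    have hdF0 : derivative (pZh (Sum.inl i)) = 0 :=
      Polynomial.funext fun x => by rw [hodei x, eval_zero]
    have hJ0 : (Z n (t (n-1)) - (if n = 1 then Zh 1 (t 0) else Z (n-1) (t (n-1))))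
        (Sum.inl i) = 0 := by
      rw [if_neg (by omega : ¬ n = 1), Pi.sub_apply]
      have h2 := hjump (n-1) (Finset.mem_Icc.mpr ⟨by omega, by omega⟩)
      rw [Nat.sub_add_cancel (by omega)] at h2
      rw [congrFun h2 (Sum.inl i), sub_self]
    have hint0 : ∀ q : Polynomial ℝ, q.natDegree ≤ r n →
        (∫ x in (t (n-1))..(t n), (derivative (pZ (Sum.inl i))).eval x * q.eval x) = 0 := by
      intro q hq
      have h := key (Sum.inl i) q hq
      rw [hdF0, hJ0] at h
      simp only [eval_zero, zero_mul, intervalIntegral.integral_zero, add_zero] at h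
      linarith [h]
    have hd0 : derivative (pZ (Sum.inl i)) = 0 := by
      apply poly_sq_integral_zero (hab n (by omega) hnN)
      have hdd : (derivative (pZ (Sum.inl i))).natDegree ≤ r n := by
        have h1 := natDegree_derivative_le (pZ (Sum.inl i))
        have h2 := hdZ (Sum.inl i)
        omega
      have h := hint0 (derivative (pZ (Sum.inl i))) hdd
      simpa [pow_two] using h
    have hc := Polynomial.eq_C_of_natDegree_le_zero
      (natDegree_eq_zero_of_derivative_eq_zero hd0).le
    rw [heZ (Sum.inl i) s, heZ (Sum.inl i) u, hc, eval_C, eval_C]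
  -- downward induction: u-components vanish on slabs n ≥ 2
  have huz : ∀ jj n, 2 ≤ n → n ≤ N → N = n + jj → ∀ (s : ℝ) (i : Fin d),
      Z n s (Sum.inl i) = 0 := by
    intro jj
    induction jj with
    | zero =>
      intro n hn2 hnN hNe s i
      have hnN' : n = N := by omega
      subst hnN'
      rw [hconst2 n hn2 hnN i s (t n)]
      exact congrFun hzT (Sum.inl i)
    | succ jj ih =>
      intro n hn2 hnN hNe s i
      have h1 : Z (n+1) (t n) (Sum.inl i) = 0 := ih (n+1) (by omega) (by omega) (by omega) (t n) i
      have h2 := hjump n (Finset.mem_Icc.mpr ⟨by omega, by omega⟩)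
      rw [hconst2 n hn2 hnN i s (t n), ← congrFun h2 (Sum.inl i)]
      exact h1
  have huz' : ∀ n, 2 ≤ n → n ≤ N → ∀ (s : ℝ) (i : Fin d), Z n s (Sum.inl i) = 0 :=
    fun n h2 hN' => huz (N - n) n h2 hN' (by omega)
  -- the value of u at the right end of the first slab vanishes
  have hz1T : ∀ i : Fin d, Z 1 (t 1) (Sum.inl i) = 0 := by
    intro i
    rcases eq_or_lt_of_le hN with h1 | h1
    · have hN1 : N = 1 := h1.symm
      subst hN1
      exact congrFun hzT (Sum.inl i)
    · have h2 := hjump 1 (Finset.mem_Icc.mpr ⟨le_rfl, by omega⟩)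
      rw [← congrFun h2 (Sum.inl i)]
      exact huz' 2 le_rfl (by omega) (t 1) i
  -- first slab u-components vanish
  have hu1 : ∀ (s : ℝ) (i : Fin d), Z 1 s (Sum.inl i) = 0 := by
    intro s i
    have hnIcc : (1:ℕ) ∈ Finset.Icc 1 N := Finset.mem_Icc.mpr ⟨le_rfl, hN⟩
    choose pZ hdZ heZ using hZpoly 1 hnIcc
    choose pZh hdZh heZh using hZhpoly 1 hnIcc
    have key : ∀ (i0 : Fin d ⊕ Fin d) (q : Polynomial ℝ), q.natDegree ≤ r 1 →
        (∫ s in (t (1-1))..(t 1), (derivative (pZh i0)).eval s * q.eval s)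
          = (∫ s in (t (1-1))..(t 1), (derivative (pZ i0)).eval s * q.eval s)
            + (Z 1 (t (1-1)) - (if (1:ℕ) = 1 then Zh 1 (t 0) else Z (1-1) (t (1-1)))) i0
              * q.eval (t (1-1)) :=
      fun i0 q hq => ident_single (fun i s => heZh i s) (fun i s => heZ i s)
        (hident 1 hnIcc) i0 q hq
    have ht01 : t (1-1) = t 0 := by norm_num
    have hodei : ∀ s' : ℝ, (derivative (pZh (Sum.inl i))).eval s' = 0 := by
      intro s'
      have h1 := hode 1 hnIcc s'
      rw [deriv_of_polyVec (F := fun τ k => Zh 1 τ (Sum.inl k))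
        (p := fun k => pZh (Sum.inl k)) (fun k s => heZh (Sum.inl k) s) s'] at h1
      have h3 := congrFun h1 i
      rw [h3]
      exact hwhat 1 hnIcc s' i
    have hdF0 : derivative (pZh (Sum.inl i)) = 0 :=
      Polynomial.funext fun x => by rw [hodei x, eval_zero]
    have hkey1 : ∀ q : Polynomial ℝ, q.natDegree ≤ r 1 →
        0 = (∫ x in (t 0)..(t 1), (derivative (pZ (Sum.inl i))).eval x * q.eval x)
            - Zh 1 (t 0) (Sum.inl i) * q.eval (t 0) := by
      intro q hq
      have h := key (Sum.inl i) q hq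
      rw [ht01, hz0, if_pos rfl, hdF0] at h
      simp only [eval_zero, zero_mul, intervalIntegral.integral_zero,
        Pi.sub_apply, Pi.zero_apply, zero_sub] at h
      rw [h]; ring
    have hZh10 : Zh 1 (t 0) (Sum.inl i) = 0 := by
      have h := hkey1 1 (by simp)
      simp only [eval_one, mul_one] at h
      rw [pint (pZ (Sum.inl i)) (t 0) (t 1)] at h
      have hpa : (pZ (Sum.inl i)).eval (t 0) = 0 := by
        rw [← heZ (Sum.inl i) (t 0)]
        exact congrFun hz0 (Sum.inl i)
      have hpb : (pZ (Sum.inl i)).eval (t 1) = 0 := by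
        rw [← heZ (Sum.inl i) (t 1)]
        exact hz1T i
      rw [hpa, hpb] at h
      linarith
    have hint0 : ∀ q : Polynomial ℝ, q.natDegree ≤ r 1 →
        (∫ x in (t 0)..(t 1), (derivative (pZ (Sum.inl i))).eval x * q.eval x) = 0 := by
      intro q hq
      have h := hkey1 q hq
      rw [hZh10] at h
      linarith [h]
    have hd0 : derivative (pZ (Sum.inl i)) = 0 := by
      apply poly_sq_integral_zero (ht01 ▸ hab 1 le_rfl hN)
      have hdd : (derivative (pZ (Sum.inl i))).natDegree ≤ r 1 := by
        have h1 := natDegree_derivative_le (pZ (Sum.inl i))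
        have h2 := hdZ (Sum.inl i)
        omega
      have h := hint0 (derivative (pZ (Sum.inl i))) hdd
      simpa [pow_two] using h
    have hc := Polynomial.eq_C_of_natDegree_le_zero
      (natDegree_eq_zero_of_derivative_eq_zero hd0).le
    have hval : (pZ (Sum.inl i)).eval (t 0) = 0 := by
      rw [← heZ (Sum.inl i) (t 0)]
      exact congrFun hz0 (Sum.inl i)
    rw [hc, eval_C] at hval
    rw [heZ (Sum.inl i) s, hc, eval_C, hval]
  -- assembly
  intro n hnIcc s
  have hn := Finset.mem_Icc.mp hnIcc
  funext k
  cases k with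
  | inl i =>
    rcases eq_or_lt_of_le hn.1 with h1 | h1
    · have : n = 1 := h1.symm
      subst this
      exact hu1 s i
    · exact huz' n (by omega) hn.2 s i
  | inr j => exact hw n hnIcc s j


set_option maxHeartbeats 1000000 in
/-- With `P, L, K` symmetric positive definite,
`K̃ = [[K,0],[0,P]]`, `L̃ = [[0,0],[0,L^{1/2}]]` and a partition `0 = t₀ < ⋯ < t_N = T`,
the functional `|||·|||` is a norm on `V_DG^r`: it is absolutely homogeneous,
satisfies the triangle inequality, and is definite — in particular, if `z ∈ V_DG^r`
satisfies `|||z||| = 0` then `z = 0` identically on `(0,T]`. -/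
theorem stmt_4 {d N : ℕ} (hd : 1 ≤ d) (hN : 1 ≤ N)
    (P L K : Matrix (Fin d) (Fin d) ℝ) (hP : P.PosDef) (hL : L.PosDef) (hK : K.PosDef)
    (hKP : (Matrix.fromBlocks K 0 0 P).PosDef)
    (T : ℝ) (hT : 0 < T) (t : ℕ → ℝ) (ht0 : t 0 = 0) (htN : t N = T)
    (hmono : ∀ n < N, t n < t (n+1)) (r : ℕ → ℕ) :
    (∀ Z : ℕ → ℝ → (Fin d ⊕ Fin d) → ℝ, MemDG N t r Z → ∀ c : ℝ,
       Real.sqrt (dgNormSq (Matrix.fromBlocks 0 0 0 hL.posSemidef.sqrt)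
           hKP.posSemidef.sqrt N t (fun n τ => c • Z n τ))
         = |c| * Real.sqrt (dgNormSq (Matrix.fromBlocks 0 0 0 hL.posSemidef.sqrt)
             hKP.posSemidef.sqrt N t Z)) ∧
    (∀ Z Y : ℕ → ℝ → (Fin d ⊕ Fin d) → ℝ, MemDG N t r Z → MemDG N t r Y →
       Real.sqrt (dgNormSq (Matrix.fromBlocks 0 0 0 hL.posSemidef.sqrt)
           hKP.posSemidef.sqrt N t (fun n τ => Z n τ + Y n τ))
         ≤ Real.sqrt (dgNormSq (Matrix.fromBlocks 0 0 0 hL.posSemidef.sqrt)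
             hKP.posSemidef.sqrt N t Z)
           + Real.sqrt (dgNormSq (Matrix.fromBlocks 0 0 0 hL.posSemidef.sqrt)
               hKP.posSemidef.sqrt N t Y)) ∧
    (∀ Z : ℕ → ℝ → (Fin d ⊕ Fin d) → ℝ, MemDG N t r Z →
       Real.sqrt (dgNormSq (Matrix.fromBlocks 0 0 0 hL.posSemidef.sqrt)
           hKP.posSemidef.sqrt N t Z) = 0 →
       ∀ n ∈ Finset.Icc 1 N, ∀ s ∈ Set.Ioc (t (n-1)) (t n), Z n s = 0) := by
  set Lt : Matrix (Fin d ⊕ Fin d) (Fin d ⊕ Fin d) ℝ :=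
    Matrix.fromBlocks 0 0 0 hL.posSemidef.sqrt with hLt
  set Ks : Matrix (Fin d ⊕ Fin d) (Fin d ⊕ Fin d) ℝ := hKP.posSemidef.sqrt with hKs
  refine ⟨?_, ?_, ?_⟩
  · -- homogeneity
    intro Z _ c
    rw [dg_smul, Real.sqrt_mul (sq_nonneg c), Real.sqrt_sq_eq_abs]
  · -- triangle inequality
    intro Z Y hZ hY
    have hZc : ∀ n ∈ Finset.Icc 1 N, ∀ i, Continuous fun s => Z n s i :=
      fun n hn i => cont_comp (hZ.1 n hn) i
    have hYc : ∀ n ∈ Finset.Icc 1 N, ∀ i, Continuous fun s => Y n s i :=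
      fun n hn i => cont_comp (hY.1 n hn) i
    set QZ := dgNormSq Lt Ks N t Z with hQZ
    set QY := dgNormSq Lt Ks N t Y with hQY
    set B := dgBil Lt Ks N t Z Y with hB
    have hexp := dg_expand Lt Ks (t := t) hZc hYc
    have hQZ0 : 0 ≤ QZ := dg_nonneg Lt Ks t hmono Z
    have hQY0 : 0 ≤ QY := dg_nonneg Lt Ks t hmono Y
    have hdisc : B^2 ≤ QZ * QY := by
      have hx : ∀ x : ℝ, 0 ≤ QY * (x*x) + (2*B) * x + QZ := by
        intro x
        have hY'c : ∀ n ∈ Finset.Icc 1 N, ∀ i,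
            Continuous fun s => (fun n τ => x • Y n τ) n s i := by
          intro n hn i
          exact continuous_const.mul (hYc n hn i)
        have e := dg_expand Lt Ks (t := t) hZc hY'c
        have h0 := dg_nonneg Lt Ks t hmono
          (fun n τ => Z n τ + (fun n τ => x • Y n τ) n τ)
        rw [e, dgBil_smul_right, dg_smul] at h0
        nlinarith [h0]
      have hd := discrim_le_zero hx
      rw [discrim] at hd
      nlinarith [hd]
    have hBle : B ≤ Real.sqrt QZ * Real.sqrt QY := by
      calc B ≤ |B| := le_abs_self B
        _ = Real.sqrt (B^2) := (Real.sqrt_sq_eq_abs B).symm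
        _ ≤ Real.sqrt (QZ * QY) := Real.sqrt_le_sqrt hdisc
        _ = Real.sqrt QZ * Real.sqrt QY := Real.sqrt_mul hQZ0 QY
    rw [hexp]
    have hle : QZ + 2*B + QY ≤ (Real.sqrt QZ + Real.sqrt QY)^2 := by
      have e1 : Real.sqrt QZ ^ 2 = QZ := Real.sq_sqrt hQZ0
      have e2 : Real.sqrt QY ^ 2 = QY := Real.sq_sqrt hQY0
      nlinarith [hBle]
    calc Real.sqrt (QZ + 2*B + QY)
        ≤ Real.sqrt ((Real.sqrt QZ + Real.sqrt QY)^2) := Real.sqrt_le_sqrt hle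
      _ = Real.sqrt QZ + Real.sqrt QY :=
          Real.sqrt_sq (by positivity)
  · -- definiteness
    intro Z hZ hsqrt n hnIcc s _
    have hQ0 : dgNormSq Lt Ks N t Z = 0 := by
      have hnn := dg_nonneg Lt Ks t hmono Z
      have h1 := Real.sqrt_eq_zero'.mp hsqrt
      linarith
    exact dg_definite hN hL hKP hmono hZ hQ0 n hnIcc s
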